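/- For every integer t ≥ 3 there exists an integer q ≥ 1 such that D_m(t,q) ≤ 16t³ − 8t² − 26t − 14 ≤ D^m(t,q). -/
import Mathlib


open Finset

/-- `D_m(t,q) = (3t+1)·2q − 2^(a+1) + (a+1)·2q + 4a` where `a = ⌊log₂(2q+3)⌋`. -/
def Dlow (t q : ℕ) : ℤ :=
  (3 * (t : ℤ) + 1) * (2 * q) - 2 ^ (Nat.log 2 (2 * q + 3) + 1)
    + ((Nat.log 2 (2 * q + 3) : ℤ) + 1) * (2 * q) + 4 * (Nat.log 2 (2 * q + 3) : ℤ)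

/-- `D^m(t,q) = (3t+1)·2q + q² + 5q`. -/
def Dhigh (t q : ℕ) : ℤ :=
  (3 * (t : ℤ) + 1) * (2 * q) + (q : ℤ) ^ 2 + 5 * q

lemma quad_lt_two_pow : ∀ t : ℕ, 2 * t ^ 2 + 2 * t + 3 < 2 ^ (t + 2) := by
  intro t
  induction t with
  | zero => norm_num
  | succ n ih =>
    have h2 : 2 ^ (n + 1 + 2) = 2 * 2 ^ (n + 2) := by ring
    rcases Nat.eq_zero_or_pos n with h | h
    · subst h; norm_num
    · have hexp : (n + 1) ^ 2 = n ^ 2 + 2 * n + 1 := by ring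
      have hn2 : n ≤ n ^ 2 := by nlinarith
      omega

/-- For every `t ≥ 3` there exists `q ≥ 1` with
`D_m(t,q) ≤ 16t³ − 8t² − 26t − 14 ≤ D^m(t,q)`. -/
theorem exists_q_between_Dlow_Dhigh (t : ℕ) (ht : 3 ≤ t) :
    ∃ q : ℕ, 1 ≤ q ∧
      Dlow t q ≤ 16 * (t : ℤ) ^ 3 - 8 * (t : ℤ) ^ 2 - 26 * (t : ℤ) - 14 ∧
      16 * (t : ℤ) ^ 3 - 8 * (t : ℤ) ^ 2 - 26 * (t : ℤ) - 14 ≤ Dhigh t q := by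
  rcases Nat.lt_or_ge t 4 with h4 | h4
  · -- t = 3
    have ht3 : t = 3 := by omega
    subst ht3
    refine ⟨9, by norm_num, ?_, ?_⟩
    · have hlog : Nat.log 2 (2 * 9 + 3) = 4 := by
        rw [show 2 * 9 + 3 = 21 by norm_num]
        exact Nat.log_eq_of_pow_le_of_lt_pow (by norm_num) (by norm_num)
      simp only [Dlow, hlog]
      norm_num
    · simp only [Dhigh]; norm_num
  · -- t ≥ 4, take q = t² + t
    refine ⟨t ^ 2 + t, by nlinarith, ?_, ?_⟩
    · -- lower bound
      set a := Nat.log 2 (2 * (t ^ 2 + t) + 3) with ha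
      have halt : a ≤ t + 1 := by
        have h := quad_lt_two_pow t
        have := Nat.log_lt_of_lt_pow (b := 2) (y := 2 * (t ^ 2 + t) + 3) (x := t + 2)
          (by omega) (by omega)
        omega
      have hpow : (2 * (t ^ 2 + t) + 3 : ℕ) < 2 ^ (a + 1) :=
        Nat.lt_pow_succ_log_self (by norm_num) _
      have hpowZ : (2 * ((t : ℤ) ^ 2 + t) + 4) ≤ 2 ^ (a + 1) := by
        have : ((2 * (t ^ 2 + t) + 3 + 1 : ℕ) : ℤ) ≤ ((2 ^ (a + 1) : ℕ) : ℤ) := by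
          exact_mod_cast hpow
        push_cast at this
        linarith
      have haZ : (a : ℤ) ≤ (t : ℤ) + 1 := by exact_mod_cast halt
      have htZ : (4 : ℤ) ≤ t := by exact_mod_cast h4
      simp only [Dlow, ← ha]
      push_cast
      nlinarith [sq_nonneg ((t : ℤ)), mul_nonneg (mul_nonneg (by linarith : (0:ℤ) ≤ t) (by linarith : (0:ℤ) ≤ t)) (by linarith : (0:ℤ) ≤ (t:ℤ) + 1 - a),
        mul_nonneg (by linarith : (0:ℤ) ≤ t) (by linarith : (0:ℤ) ≤ (t:ℤ) + 1 - a)]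
    · -- upper bound
      have htZ : (4 : ℤ) ≤ t := by exact_mod_cast h4
      simp only [Dhigh]
      push_cast
      nlinarith [sq_nonneg ((t : ℤ) ^ 2 - 4 * t), sq_nonneg ((t : ℤ) - 4)]
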